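/- Let R be an n×m matrix and let K = K_R(R) = {Rp : p ≥ 0} be a proper cone. Suppose A is an n×n matrix such that for some α ∈ ℝ and some entrywise strictly positive m×m matrix P one has (αI + A)R = RP. Then for every nonzero δx ∈ K and every nonzero h in the dual cone K* with ⟨h, δx⟩ = 0, one has ⟨h, A δx⟩ > 0. -/

import Mathlib

open Matrix

/-- A (convex) cone: closed under addition and nonnegative scaling. -/
def IsConvexCone {n : ℕ} (K : Set (Fin n → ℝ)) : Prop :=
  (∀ x ∈ K, ∀ y ∈ K, x + y ∈ K) ∧ (∀ x ∈ K, ∀ c : ℝ, 0 ≤ c → c • x ∈ K)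

/-- A proper cone: closed convex cone with nonempty interior, pointed. -/
def IsProperCone {n : ℕ} (K : Set (Fin n → ℝ)) : Prop :=
  IsConvexCone K ∧ IsClosed K ∧ (interior K).Nonempty ∧ ∀ x ∈ K, -x ∈ K → x = 0

/-- The dual cone. -/
def dualCone {n : ℕ} (K : Set (Fin n → ℝ)) : Set (Fin n → ℝ) :=
  {h | ∀ r ∈ K, 0 ≤ h ⬝ᵥ r}

/-- The conical hull of the columns of a matrix (R-representation). -/
def coneOf {n m : ℕ} (R : Matrix (Fin n) (Fin m) ℝ) : Set (Fin n → ℝ) :=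
  {x | ∃ p : Fin m → ℝ, (∀ j, 0 ≤ p j) ∧ x = R *ᵥ p}

/-- If K = K_R(R) is a proper cone and (αI + A)R = RP with P entrywise positive,
then A satisfies the strict sub-tangentiality condition with respect to K. -/
theorem stmt3 {n m : ℕ} (R : Matrix (Fin n) (Fin m) ℝ) (A : Matrix (Fin n) (Fin n) ℝ)
    (hproper : IsProperCone (coneOf R))
    (α : ℝ) (P : Matrix (Fin m) (Fin m) ℝ) (hP : ∀ i j, 0 < P i j)
    (heq : (α • (1 : Matrix (Fin n) (Fin n) ℝ) + A) * R = R * P) :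
    ∀ δx ∈ coneOf R, δx ≠ 0 → ∀ h ∈ dualCone (coneOf R), h ≠ 0 →
      h ⬝ᵥ δx = 0 → 0 < h ⬝ᵥ (A *ᵥ δx) := by
  rintro δx ⟨p, hp, rfl⟩ hδ h hK hh h0
  -- q = hᵀ R is nonnegative
  set q : Fin m → ℝ := h ᵥ* R with hq
  have hqnn : ∀ j, 0 ≤ q j := by
    intro j
    have hcol : (R *ᵥ (fun k => if k = j then (1:ℝ) else 0)) ∈ coneOf R :=
      ⟨_, fun k => by split <;> norm_num, rfl⟩
    have := hK _ hcol
    simpa [hq, vecMul, mulVec, dotProduct, Finset.mul_sum, mul_ite,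
      Finset.sum_ite_eq', mul_comm] using this
  -- p ≠ 0
  have hpne : p ≠ 0 := by
    rintro rfl; exact hδ (by simp)
  obtain ⟨k0, hk0⟩ : ∃ k, 0 < p k := by
    by_contra hcon
    push_neg at hcon
    exact hpne (funext fun k => le_antisymm (hcon k) (hp k))
  -- P *ᵥ p is entrywise positive
  have hPp : ∀ j, 0 < (P *ᵥ p) j := by
    intro j
    have : 0 < ∑ k, P j k * p k := by
      apply Finset.sum_pos' (fun k _ => mul_nonneg (hP j k).le (hp k))
      exact ⟨k0, Finset.mem_univ _, mul_pos (hP j k0) hk0⟩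
    simpa [mulVec, dotProduct] using this
  -- q ≠ 0, else h vanishes on K which has nonempty interior
  have hqne : q ≠ 0 := by
    intro hq0
    have hvan : ∀ x ∈ coneOf R, h ⬝ᵥ x = 0 := by
      rintro x ⟨p', _, rfl⟩
      have : q ⬝ᵥ p' = 0 := by rw [hq0]; simp
      simpa [hq, dotProduct_mulVec] using this
    obtain ⟨x0, hx0⟩ := hproper.2.2.1
    rw [mem_interior_iff_mem_nhds, Metric.mem_nhds_iff] at hx0
    obtain ⟨ε, hε, hball⟩ := hx0
    set t : ℝ := ε / (2 * (‖h‖ + 1)) with ht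
    have htpos : 0 < t := div_pos hε (by positivity)
    have hmem : x0 + t • h ∈ coneOf R := by
      apply hball
      have : dist (x0 + t • h) x0 = ‖t • h‖ := by
        simp [dist_eq_norm]
      rw [Metric.mem_ball, this, norm_smul, Real.norm_eq_abs, abs_of_pos htpos]
      calc t * ‖h‖ ≤ t * (‖h‖ + 1) := by nlinarith [norm_nonneg h]
        _ = ε / (2 * (‖h‖ + 1)) * (‖h‖ + 1) := rfl
        _ = ε / 2 := by field_simp
        _ < ε := by linarith
    have hx0mem : x0 ∈ coneOf R := interior_subset (by
      rw [mem_interior_iff_mem_nhds, Metric.mem_nhds_iff]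
      exact ⟨ε, hε, hball⟩)
    have h1 := hvan _ hmem
    have h2 := hvan _ hx0mem
    rw [dotProduct_add, h2, zero_add, dotProduct_smul, smul_eq_mul] at h1
    have : h ⬝ᵥ h = 0 := by
      rcases mul_eq_zero.mp h1 with h' | h'
      · exact absurd h' htpos.ne'
      · exact h'
    exact hh (dotProduct_self_eq_zero.mp this)
  obtain ⟨j0, hj0⟩ : ∃ j, 0 < q j := by
    by_contra hcon
    push_neg at hcon
    exact hqne (funext fun j => le_antisymm (hcon j) (hqnn j))
  -- main computation
  have key : h ⬝ᵥ (A *ᵥ (R *ᵥ p)) = q ⬝ᵥ (P *ᵥ p) := by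
    have e1 : h ⬝ᵥ (((α • (1 : Matrix (Fin n) (Fin n) ℝ) + A) * R) *ᵥ p)
        = h ⬝ᵥ ((R * P) *ᵥ p) := by rw [heq]
    rw [← Matrix.mulVec_mulVec, ← Matrix.mulVec_mulVec, Matrix.add_mulVec,
      dotProduct_add, Matrix.smul_mulVec, Matrix.one_mulVec,
      dotProduct_smul, smul_eq_mul, h0, mul_zero, zero_add] at e1
    rw [e1, dotProduct_mulVec, hq]
  rw [key]
  have : 0 < ∑ j, q j * (P *ᵥ p) j := by
    apply Finset.sum_pos' (fun j _ => mul_nonneg (hqnn j) (hPp j).le)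
    exact ⟨j0, Finset.mem_univ _, mul_pos hj0 (hPp j0)⟩
  simpa [dotProduct] using this
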